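/- Let λ be a partition of n with λ_1 ≥ n/2. Then χ_λ(1) ≥ C(λ_1, n - λ_1) · χ_μ(1), where μ = λ\λ_1 is the partition obtained from λ by deleting its first row. -/

import Mathlib

/-- `l` represents a partition of `n` (0-indexed parts). -/
def IsPartitionFun (n : ℕ) (l : ℕ → ℕ) : Prop :=
  Antitone l ∧ (∀ i, n ≤ i → l i = 0) ∧ ∑ i ∈ Finset.range n, l i = n

/-- side of largest square in the Ferrers diagram: largest `j` with `λ_j ≥ j`. -/
def sqSide (n : ℕ) (l : ℕ → ℕ) : ℕ :=
  Nat.findGreatest (fun j => 0 < j ∧ j ≤ l (j - 1)) n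

/-- the conjugate partition (0-indexed): `λ'_j = #{i : λ_i > j}`. -/
def conjPart (n : ℕ) (l : ℕ → ℕ) (j : ℕ) : ℕ :=
  ((Finset.range n).filter fun i => j + 1 ≤ l i).card

/-- hook length of the (0-indexed) cell `(i,j)`. -/
def hookLength (n : ℕ) (l : ℕ → ℕ) (i j : ℕ) : ℕ :=
  (l i - (j + 1)) + (conjPart n l j - (i + 1)) + 1

/-- the cells of the Ferrers diagram of `λ` (0-indexed). -/
def cells (n : ℕ) (l : ℕ → ℕ) : Finset (ℕ × ℕ) :=
  (Finset.range n ×ˢ Finset.range n).filter fun p => p.2 < l p.1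

/-- the degree `χ_λ(1)` of the irreducible character of `S_n` indexed by `λ`, given by
the hook length formula `χ_λ(1) = n! / ∏ h_{i,j}`. -/
noncomputable def charDegree (n : ℕ) (l : ℕ → ℕ) : ℝ :=
  (n.factorial : ℝ) / ∏ p ∈ cells n l, (hookLength n l p.1 p.2 : ℝ)

lemma aux_prod_asc (k m : ℕ) :
    k.factorial * ∏ j ∈ Finset.range m, (k + 1 + j) = (k + m).factorial := by
  induction m with
  | zero => simp
  | succ m ih =>
      rw [Finset.prod_range_succ, ← mul_assoc, ih, ← Nat.add_assoc, Nat.factorial_succ,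
        Nat.mul_comm]
      congr 1
      omega

lemma aux_prod_desc (d : ℕ) : ∏ j ∈ Finset.range d, (d - j) = d.factorial := by
  rw [← Finset.prod_range_reflect]
  rw [← Finset.prod_range_add_one_eq_factorial d]
  apply Finset.prod_congr rfl
  intro j hj
  simp only [Finset.mem_range] at hj
  omega

/-- if `λ₁ ≥ n/2` then `χ_λ(1) ≥ C(λ₁, n-λ₁) · χ_{λ∖λ₁}(1)`, where
`λ∖λ₁ = (λ₂, λ₃, …)` is the partition of `n - λ₁` obtained by deleting the first row. -/
theorem stmt5 (n : ℕ) (l : ℕ → ℕ) (h : IsPartitionFun n l) (h2 : n ≤ 2 * l 0) :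
    ((l 0).choose (n - l 0) : ℝ) * charDegree (n - l 0) (fun i => l (i + 1))
      ≤ charDegree n l := by
  obtain ⟨hmono, hzero, hsum⟩ := h
  rcases Nat.eq_zero_or_pos n with hn | hn
  · subst hn
    have h0 : l 0 = 0 := hzero 0 le_rfl
    simp [charDegree, cells, h0]
  -- main case
  set μ : ℕ → ℕ := fun i => l (i + 1) with hμ
  set k := l 0 with hk
  set m := n - k with hm
  -- k ≥ 1
  have hk1 : 1 ≤ k := by
    by_contra hc
    push_neg at hc
    have : ∀ i ∈ Finset.range n, l i = 0 := by
      intro i _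
      have := hmono (Nat.zero_le i)
      omega
    rw [Finset.sum_congr rfl this] at hsum
    simp at hsum
    omega
  have hkn : k ≤ n := by
    have : l 0 ≤ ∑ i ∈ Finset.range n, l i :=
      Finset.single_le_sum (fun i _ => Nat.zero_le _) (Finset.mem_range.mpr hn)
    omega
  have hmk : m ≤ k := by omega
  have hnkm : n = k + m := by omega
  -- sum of the tail
  have hsum' : ∑ i ∈ Finset.range (n - 1), l (i + 1) = m := by
    have h1 : ∑ i ∈ Finset.range ((n-1)+1), l i = n := by
      have : (n-1)+1 = n := by omega
      rw [this]; exact hsum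
    rw [Finset.sum_range_succ'] at h1
    omega
  -- positive tail parts are among the first m
  have htail : ∀ i, 0 < l (i + 1) → i < m := by
    intro i hi
    by_contra hc
    push_neg at hc
    have hin : i + 1 < n := by
      by_contra hc2
      push_neg at hc2
      have := hzero (i+1) hc2
      omega
    have hsub : Finset.range (i+1) ⊆ Finset.range (n-1) := by
      apply Finset.range_subset_range.mpr; omega
    have hle : ∑ t ∈ Finset.range (i+1), l (t+1) ≤ ∑ t ∈ Finset.range (n-1), l (t+1) :=
      Finset.sum_le_sum_of_subset hsub
    have hge : (i+1) * l (i+1) ≤ ∑ t ∈ Finset.range (i+1), l (t+1) := by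
      calc (i+1) * l (i+1) = ∑ _t ∈ Finset.range (i+1), l (i+1) := by
            rw [Finset.sum_const, Finset.card_range, smul_eq_mul]
        _ ≤ ∑ t ∈ Finset.range (i+1), l (t+1) := by
            apply Finset.sum_le_sum
            intro t ht
            exact hmono (by simp at ht; omega)
    have : (i+1) * l (i+1) ≤ m := by omega
    nlinarith
  have hl1 : l 1 ≤ m := by
    rcases Nat.lt_or_ge 1 n with h1 | h1
    · have h0 : 0 ∈ Finset.range (n-1) := Finset.mem_range.mpr (by omega)
      have h2 : l 1 ≤ ∑ i ∈ Finset.range (n-1), l (i+1) := by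
        simpa using Finset.single_le_sum (f := fun i => l (i+1))
          (fun i _ => Nat.zero_le _) h0
      omega
    · have := hzero 1 (by omega)
      omega
  -- conjugate partition decomposition
  have hconj_decomp : ∀ j, j < k →
      conjPart n l j = 1 + ((Finset.range m).filter fun i => j + 1 ≤ l (i+1)).card := by
    intro j hj
    rw [conjPart, Finset.card_filter, Finset.card_filter]
    have hrw : n = (n-1)+1 := by omega
    rw [hrw, Finset.sum_range_succ']
    have h0 : (if j + 1 ≤ l 0 then 1 else 0) = 1 := by
      rw [if_pos]; omega
    rw [h0, add_comm]
    congr 1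
    refine (Finset.sum_subset (Finset.range_subset_range.mpr (show m ≤ n-1 by omega)) ?_).symm
    intro i hi hnotm
    simp only [Finset.mem_range] at hi hnotm
    rw [if_neg]
    intro hcon
    exact hnotm (htail i (by omega))
  have hconj_eq : ∀ j, j < k →
      conjPart n l j = conjPart m μ j + 1 := by
    intro j hj
    rw [hconj_decomp j hj]
    simp [conjPart, hμ]
    omega
  -- bound: number of nonzero tail parts ≤ m
  have hconj_le : ∀ j, j < k → conjPart n l j ≤ m + 1 := by
    intro j hj
    rw [hconj_decomp j hj]
    have h1 := Finset.card_filter_le (Finset.range m) (fun i => j + 1 ≤ l (i+1))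
    rw [Finset.card_range] at h1
    omega
  have hconj_one : ∀ j, m ≤ j → j < k → conjPart n l j = 1 := by
    intro j hj1 hj2
    rw [hconj_decomp j hj2]
    have : (Finset.range m).filter (fun i => j + 1 ≤ l (i+1)) = ∅ := by
      apply Finset.filter_false_of_mem
      intro i _
      have : l (i+1) ≤ l 1 := hmono (by omega)
      omega
    rw [this]
    simp
  -- hook lengths on row 0
  have hrow0 : ∀ j, j < k → hookLength n l 0 j = (k - (j+1)) + (conjPart n l j - 1) + 1 := by
    intro j hj
    rfl
  -- cells split
  have hB1 : (cells n l).filter (fun p => p.1 = 0) =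
      (Finset.range k).image (fun j => ((0 : ℕ), j)) := by
    ext ⟨a, b⟩
    simp only [cells, Finset.mem_filter, Finset.mem_product, Finset.mem_range,
      Finset.mem_image]
    constructor
    · rintro ⟨⟨⟨ha, hb⟩, hbl⟩, ha0⟩
      subst ha0
      exact ⟨b, by omega, rfl⟩
    · rintro ⟨j, hj, hje⟩
      cases hje
      exact ⟨⟨⟨hn, by omega⟩, by omega⟩, rfl⟩
  have hB2 : (cells n l).filter (fun p => ¬ p.1 = 0) =
      (cells m μ).image (fun p => (p.1 + 1, p.2)) := by
    ext ⟨a, b⟩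
    simp only [cells, Finset.mem_filter, Finset.mem_product, Finset.mem_range,
      Finset.mem_image, hμ]
    constructor
    · rintro ⟨⟨⟨ha, hb⟩, hbl⟩, ha0⟩
      obtain ⟨i, rfl⟩ : ∃ i, a = i + 1 := ⟨a - 1, by omega⟩
      refine ⟨(i, b), ⟨⟨⟨?_, ?_⟩, hbl⟩, rfl⟩⟩
      · exact htail i (by omega)
      · have him : i < m := htail i (by omega)
        have : l (i+1) ≤ l 1 := hmono (by omega)
        omega
    · rintro ⟨⟨i, j⟩, ⟨⟨⟨hi, hj⟩, hjl⟩, hje⟩⟩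
      cases hje
      exact ⟨⟨⟨by omega, by omega⟩, hjl⟩, by omega⟩
  -- hook equality on shifted cells
  have hhook_shift : ∀ p ∈ cells m μ,
      hookLength n l (p.1 + 1) p.2 = hookLength m μ p.1 p.2 := by
    intro ⟨i, j⟩ hp
    simp only [cells, Finset.mem_filter, Finset.mem_product, Finset.mem_range] at hp
    obtain ⟨⟨hi, hj⟩, hjl⟩ := hp
    have hjk : j < k := by
      have : μ i ≤ l 1 := hmono (by omega)
      omega
    have hc := hconj_eq j hjk
    have hμi : μ i = l (i + 1) := rfl
    simp only [hookLength]
    omega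
  -- product decomposition over cells
  set A : ℕ := ∏ j ∈ Finset.range k, hookLength n l 0 j with hA
  set B : ℕ := ∏ p ∈ cells m μ, hookLength m μ p.1 p.2 with hB
  have hprod : ∏ p ∈ cells n l, hookLength n l p.1 p.2 = A * B := by
    rw [← Finset.prod_filter_mul_prod_filter_not (cells n l) (fun p => p.1 = 0)]
    congr 1
    · rw [hB1, Finset.prod_image (by intro x _ y _ hxy; simpa using hxy)]
    · rw [hB2, Finset.prod_image (by intro x _ y _ hxy; simp at hxy; exact Prod.ext hxy.1 hxy.2)]
      exact Finset.prod_congr rfl hhook_shift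
  -- the key natural number inequality
  have hA_le : A ≤ (∏ j ∈ Finset.range m, (k + 1 + j)) * (k - m).factorial := by
    rw [hA, show Finset.range k = Finset.range (m + (k - m)) from by congr 1; omega,
      Finset.prod_range_add]
    apply Nat.mul_le_mul
    · calc ∏ j ∈ Finset.range m, hookLength n l 0 j
          ≤ ∏ j ∈ Finset.range m, (k + m - j) := by
            apply Finset.prod_le_prod'
            intro j hj
            simp only [Finset.mem_range] at hj
            have hc := hconj_le j (by omega)
            simp only [hookLength]
            omega
        _ = ∏ j ∈ Finset.range m, (k + 1 + j) := by
            rw [← Finset.prod_range_reflect (fun j => k + 1 + j) m]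
            exact Finset.prod_congr rfl (fun j hj => by
              simp only [Finset.mem_range] at hj; omega)
    · rw [← aux_prod_desc (k - m)]
      apply Nat.le_of_eq
      apply Finset.prod_congr rfl
      intro j hj
      simp only [Finset.mem_range] at hj
      have hc := hconj_one (m + j) (by omega) (by omega)
      simp only [hookLength]
      omega
  have hkey : k.choose m * m.factorial * A ≤ n.factorial := by
    calc k.choose m * m.factorial * A
        ≤ k.choose m * m.factorial * ((∏ j ∈ Finset.range m, (k + 1 + j)) * (k - m).factorial) :=
          Nat.mul_le_mul_left _ hA_le
      _ = (k.choose m * m.factorial * (k-m).factorial) * ∏ j ∈ Finset.range m, (k + 1 + j) := by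
          ring
      _ = k.factorial * ∏ j ∈ Finset.range m, (k + 1 + j) := by
          rw [Nat.choose_mul_factorial_mul_factorial hmk]
      _ = n.factorial := by rw [aux_prod_asc, ← hnkm]
  -- transfer to ℝ
  have hApos : 0 < A := by
    apply Finset.prod_pos
    intro j _
    simp [hookLength]
  have hBpos : 0 < B := by
    apply Finset.prod_pos
    intro p _
    simp [hookLength]
  rw [charDegree, charDegree]
  have hcastB : ∏ p ∈ cells m μ, (hookLength m μ p.1 p.2 : ℝ) = (B : ℝ) := by
    rw [hB]; push_cast; ring
  have hcastAB : ∏ p ∈ cells n l, (hookLength n l p.1 p.2 : ℝ) = ((A : ℕ) : ℝ) * B := by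
    rw [← Nat.cast_prod, hprod]; push_cast; ring
  rw [hcastB, hcastAB]
  rw [mul_div_assoc']
  rw [div_le_div_iff₀ (by positivity) (by positivity)]
  have : ((k.choose m : ℝ) * (n-k).factorial) * ((A : ℝ) * B)
      = ((k.choose m * m.factorial * A : ℕ) : ℝ) * B := by
    have : n - k = m := rfl
    rw [this]; push_cast; ring
  rw [this]
  have hnk : (n : ℕ) - k = m := rfl
  apply mul_le_mul_of_nonneg_right _ (by positivity)
  exact_mod_cast hkey
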